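/- Let n ≥ 1 be an integer, ξ ∈ ℂ a primitive n-th root of unity, and let c, x ∈ ℂ with x ≠ 0 and xⁿ ≠ 1. Then for every integer t with 0 ≤ t ≤ n − 1: (1/n)·Σ_{l=0}^{n−1} ξ^{t·l}·(1 − c·x⁻¹·ξ^{l})/(1 − x·ξ^{−l}) equals x^{t}·(1 − c)/(1 − xⁿ) if 0 ≤ t ≤ n − 2, and equals x^{n−1}·(1 − c·x^{−n})/(1 − xⁿ) if t = n − 1. -/

import Mathlib

open scoped BigOperators

private lemma orth_sum (n : ℕ) (ξ : ℂ) (hξ : IsPrimitiveRoot ξ n) (k : ℤ) :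
    ∑ l ∈ Finset.range n, ξ ^ (k * (l : ℤ)) = if (n : ℤ) ∣ k then (n : ℂ) else 0 := by
  have h1 : ∀ l ∈ Finset.range n, ξ ^ (k * (l : ℤ)) = (ξ ^ k) ^ l := fun l _ => by
    rw [zpow_mul, zpow_natCast]
  rw [Finset.sum_congr rfl h1]
  by_cases h : (n : ℤ) ∣ k
  · obtain ⟨m, rfl⟩ := h
    have hone : ξ ^ ((n : ℤ) * m) = 1 := by
      rw [zpow_mul, zpow_natCast, hξ.pow_eq_one, one_zpow]
    simp [hone, if_pos (Dvd.intro m rfl)]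
  · have hne : ξ ^ k ≠ 1 := fun hxk => h ((hξ.zpow_eq_one_iff_dvd k).mp hxk)
    rw [if_neg h, geom_sum_eq hne]
    have h2 : (ξ ^ k) ^ n = 1 := by
      rw [← zpow_natCast (ξ ^ k) n, ← zpow_mul, mul_comm, zpow_mul, zpow_natCast,
        hξ.pow_eq_one, one_zpow]
    rw [h2]
    simp

/-- The computational core of the unramified case of Proposition 5.1: for `ξ` a primitive
`n`-th root of unity and `x ≠ 0` with `xⁿ ≠ 1`, and `0 ≤ t ≤ n − 1`,
`(1/n)·Σ_{l=0}^{n−1} ξ^{tl}·(1 − c·x⁻¹·ξ^{l})/(1 − x·ξ^{−l})` equals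
`x^t·(1 − c)/(1 − xⁿ)` for `0 ≤ t ≤ n − 2` and `x^{n−1}·(1 − c·x^{−n})/(1 − xⁿ)` for
`t = n − 1`. -/
theorem partial_gamma_unramified_sum
    (n : ℕ) (hn : 1 ≤ n) (ξ : ℂ) (hξ : IsPrimitiveRoot ξ n)
    (c x : ℂ) (hx : x ≠ 0) (hxn : x ^ n ≠ 1)
    (t : ℕ) (ht : t ≤ n - 1) :
    (1 / (n : ℂ)) * ∑ l ∈ Finset.range n,
        ξ ^ (t * l) * (1 - c * x⁻¹ * ξ ^ l) / (1 - x * (ξ ^ l)⁻¹)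
      = if t = n - 1 then x ^ (n - 1) * (1 - c * (x ^ n)⁻¹) / (1 - x ^ n)
        else x ^ t * (1 - c) / (1 - x ^ n) := by
  have hn0 : (n : ℂ) ≠ 0 := Nat.cast_ne_zero.mpr (by omega)
  have hξ0 : ξ ≠ 0 := hξ.ne_zero (by omega)
  have hξn : ξ ^ n = 1 := hξ.pow_eq_one
  have hxn' : (1 : ℂ) - x ^ n ≠ 0 := sub_ne_zero.mpr fun h => hxn h.symm
  have hz : ∀ a b : ℕ, ξ ^ ((a : ℤ) - b) = ξ ^ a / ξ ^ b := fun a b => by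
    rw [zpow_sub₀ hξ0, zpow_natCast, zpow_natCast]
  have key : ∀ l ∈ Finset.range n,
      ξ ^ (t * l) * (1 - c * x⁻¹ * ξ ^ l) / (1 - x * (ξ ^ l)⁻¹)
      = (∑ j ∈ Finset.range n,
          (x ^ j * ξ ^ (((t : ℤ) - j) * l) - c * x⁻¹ * x ^ j * ξ ^ (((t : ℤ) + 1 - j) * l)))
        / (1 - x ^ n) := by
    intro l hl
    have hyn : (ξ ^ l) ^ n = 1 := by rw [← pow_mul, mul_comm, pow_mul, hξn, one_pow]
    have hy0 : ξ ^ l ≠ 0 := pow_ne_zero _ hξ0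
    have hden : 1 - x * (ξ ^ l)⁻¹ ≠ 0 := by
      intro h
      have h1 : x * (ξ ^ l)⁻¹ = 1 := by linear_combination -h
      have h2 : x = ξ ^ l := by
        field_simp at h1
        exact h1
      exact hxn (by rw [h2]; exact hyn)
    have hyn' : (x * (ξ ^ l)⁻¹) ^ n = x ^ n := by
      rw [mul_pow, inv_pow, hyn, inv_one, mul_one]
    have hgeom : (∑ j ∈ Finset.range n, (x * (ξ ^ l)⁻¹) ^ j) * (1 - x * (ξ ^ l)⁻¹)
        = 1 - x ^ n := by
      have hg := geom_sum_mul (x * (ξ ^ l)⁻¹) n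
      linear_combination -hg - hyn'
    have hexp : ξ ^ (t * l) * (1 - c * x⁻¹ * ξ ^ l)
          * (∑ j ∈ Finset.range n, (x * (ξ ^ l)⁻¹) ^ j)
        = ∑ j ∈ Finset.range n,
          (x ^ j * ξ ^ (((t : ℤ) - j) * l) - c * x⁻¹ * x ^ j * ξ ^ (((t : ℤ) + 1 - j) * l)) := by
      rw [Finset.mul_sum]
      refine Finset.sum_congr rfl fun j hj => ?_
      have e1 : ξ ^ (((t : ℤ) - j) * l) = ξ ^ (t * l) / ξ ^ (j * l) := by
        rw [show ((t : ℤ) - j) * l = ((t * l : ℕ) : ℤ) - ((j * l : ℕ) : ℤ) by push_cast; ring,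
          hz]
      have e2 : ξ ^ (((t : ℤ) + 1 - j) * l) = ξ ^ (t * l + l) / ξ ^ (j * l) := by
        rw [show ((t : ℤ) + 1 - j) * l = ((t * l + l : ℕ) : ℤ) - ((j * l : ℕ) : ℤ) by
          push_cast; ring, hz]
      rw [e1, e2]
      field_simp
      have hinv : ξ ^ (l * j) * ξ⁻¹ ^ (l * j) = 1 := by
        rw [← mul_pow, mul_inv_cancel₀ hξ0, one_pow]
      linear_combination (-(ξ ^ (t * l) * ξ ^ l * x ^ j * c) + ξ ^ (t * l) * x * x ^ j) * hinv
    rw [div_eq_div_iff hden hxn', ← hexp, ← hgeom]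
    ring
  rw [Finset.sum_congr rfl key, ← Finset.sum_div, Finset.sum_comm]
  have inner : ∀ j ∈ Finset.range n,
      (∑ l ∈ Finset.range n,
        (x ^ j * ξ ^ (((t : ℤ) - j) * l) - c * x⁻¹ * x ^ j * ξ ^ (((t : ℤ) + 1 - j) * l)))
      = x ^ j * (if (n : ℤ) ∣ ((t : ℤ) - j) then (n : ℂ) else 0)
        - c * x⁻¹ * x ^ j * (if (n : ℤ) ∣ ((t : ℤ) + 1 - j) then (n : ℂ) else 0) := by
    intro j _
    rw [Finset.sum_sub_distrib, ← Finset.mul_sum, ← Finset.mul_sum,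
      orth_sum n ξ hξ _, orth_sum n ξ hξ _]
  rw [Finset.sum_congr rfl inner, Finset.sum_sub_distrib]
  have s1 : ∑ j ∈ Finset.range n, x ^ j * (if (n : ℤ) ∣ ((t : ℤ) - j) then (n : ℂ) else 0)
      = x ^ t * n := by
    rw [Finset.sum_eq_single t]
    · simp
    · intro j hj hne
      have hj' := Finset.mem_range.mp hj
      rw [if_neg, mul_zero]
      intro hd
      have h0 := Int.eq_zero_of_dvd_of_natAbs_lt_natAbs hd (by omega)
      omega
    · intro h
      exact absurd (Finset.mem_range.mpr (by omega)) h
  have s2 : ∑ j ∈ Finset.range n,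
        c * x⁻¹ * x ^ j * (if (n : ℤ) ∣ ((t : ℤ) + 1 - j) then (n : ℂ) else 0)
      = if t = n - 1 then c * x⁻¹ * n else c * x⁻¹ * x ^ (t + 1) * n := by
    by_cases hT : t = n - 1
    · rw [if_pos hT, Finset.sum_eq_single 0]
      · have hdvd : (n : ℤ) ∣ ((t : ℤ) + 1 - ((0 : ℕ) : ℤ)) := ⟨1, by push_cast; omega⟩
        rw [if_pos hdvd]
        ring
      · intro j hj hne
        have hj' := Finset.mem_range.mp hj
        rw [if_neg, mul_zero]
        intro hd
        have h0 := Int.eq_zero_of_dvd_of_natAbs_lt_natAbs hd (by omega)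
        omega
      · intro h
        exact absurd (Finset.mem_range.mpr (by omega)) h
    · rw [if_neg hT, Finset.sum_eq_single (t + 1)]
      · have hdvd : (n : ℤ) ∣ ((t : ℤ) + 1 - ((t + 1 : ℕ) : ℤ)) := ⟨0, by push_cast; ring⟩
        rw [if_pos hdvd]
      · intro j hj hne
        have hj' := Finset.mem_range.mp hj
        rw [if_neg, mul_zero]
        intro hd
        have h0 := Int.eq_zero_of_dvd_of_natAbs_lt_natAbs hd (by omega)
        omega
      · intro h
        exact absurd (Finset.mem_range.mpr (by omega)) h
  rw [s1, s2]
  obtain ⟨m, rfl⟩ : ∃ m, n = m + 1 := ⟨n - 1, by omega⟩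
  simp only [Nat.add_sub_cancel]
  have hm1 : ((m : ℂ) + 1) ≠ 0 := by
    have h := hn0
    push_cast at h
    exact h
  have hxm : x ^ (m + 1) ≠ 0 := pow_ne_zero _ hx
  by_cases hT : t = m
  · rw [if_pos hT, if_pos hT, hT]
    rw [← mul_div_assoc, div_eq_div_iff hxn' hxn']
    push_cast
    field_simp
    ring
  · rw [if_neg hT, if_neg hT]
    rw [← mul_div_assoc, div_eq_div_iff hxn' hxn']
    push_cast
    field_simp
    ring
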